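/- Let A ∈ ℝ^{n×n}, B ∈ ℝ^{n×m} with B = Q₁R of full column rank, where Q = [Q₁ Q₂] is orthogonal and R is nonsingular upper triangular. Suppose X ∈ ℝ^{n×n} is orthogonal and T ∈ ℝ^{n×n} satisfies Q₂ᵀ(AX - XT) = 0. Then F = R⁻¹Q₁ᵀ(XTXᵀ - A) satisfies A + BF = XTXᵀ. In particular, the eigenvalues of A + BF are exactly the eigenvalues of T. -/

import Mathlib

open Matrix

/-- The parametric feedback `F = R⁻¹Q₁ᵀ(XTXᵀ - A)` yields `A + BF = XTXᵀ`, so the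
closed-loop matrix has the same characteristic polynomial (hence eigenvalues) as `T`. -/
theorem stmt16 (n m p : ℕ) (hmp : m + p = n)
    (A : Matrix (Fin n) (Fin n) ℝ) (B : Matrix (Fin n) (Fin m) ℝ)
    (Q₁ : Matrix (Fin n) (Fin m) ℝ) (Q₂ : Matrix (Fin n) (Fin p) ℝ)
    (R : Matrix (Fin m) (Fin m) ℝ) (hR : IsUnit R.det)
    (hQ : (Matrix.fromCols Q₁ Q₂)ᵀ * Matrix.fromCols Q₁ Q₂ = 1)
    (hQ' : Matrix.fromCols Q₁ Q₂ * (Matrix.fromCols Q₁ Q₂)ᵀ = 1)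
    (hB : B = Q₁ * R)
    (X T : Matrix (Fin n) (Fin n) ℝ) (hX : Xᵀ * X = 1) (hX' : X * Xᵀ = 1)
    (hXT : Q₂ᵀ * (A * X - X * T) = 0) :
    A + B * (R⁻¹ * Q₁ᵀ * (X * T * Xᵀ - A)) = X * T * Xᵀ ∧
    (A + B * (R⁻¹ * Q₁ᵀ * (X * T * Xᵀ - A))).charpoly = T.charpoly := by
  -- Step 1: B * R⁻¹ = Q₁
  have hBR : B * R⁻¹ = Q₁ := by
    rw [hB, Matrix.mul_assoc, Matrix.mul_nonsing_inv _ hR, Matrix.mul_one]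
  -- Step 2: Q₁Q₁ᵀ + Q₂Q₂ᵀ = 1
  have hsum : Q₁ * Q₁ᵀ + Q₂ * Q₂ᵀ = 1 := by
    have := hQ'
    rw [Matrix.transpose_fromCols, Matrix.fromCols_mul_fromRows] at this
    exact this
  -- Step 3: Q₂ᵀ * (X*T*Xᵀ - A) = 0
  rw [Matrix.mul_sub, sub_eq_zero] at hXT
  have hQ₂ : Q₂ᵀ * (X * T * Xᵀ - A) = 0 := by
    have h2 : Q₂ᵀ * A = Q₂ᵀ * (X * T * Xᵀ) := by
      calc Q₂ᵀ * A = Q₂ᵀ * (A * (X * Xᵀ)) := by rw [hX', Matrix.mul_one]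
        _ = (Q₂ᵀ * (A * X)) * Xᵀ := by rw [← Matrix.mul_assoc A, ← Matrix.mul_assoc]
        _ = (Q₂ᵀ * (X * T)) * Xᵀ := by rw [hXT]
        _ = Q₂ᵀ * (X * T * Xᵀ) := by rw [Matrix.mul_assoc]
    rw [Matrix.mul_sub, ← h2, sub_self]
  -- Step 4: Q₁ * Q₁ᵀ * M = M
  have hQ1 : Q₁ * Q₁ᵀ * (X * T * Xᵀ - A) = X * T * Xᵀ - A := by
    have hz : Q₂ * Q₂ᵀ * (X * T * Xᵀ - A) = 0 := by
      rw [Matrix.mul_assoc, hQ₂, Matrix.mul_zero]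
    have h : Q₁ * Q₁ᵀ * (X * T * Xᵀ - A) + Q₂ * Q₂ᵀ * (X * T * Xᵀ - A)
        = X * T * Xᵀ - A := by
      rw [← Matrix.add_mul, hsum, Matrix.one_mul]
    rw [hz, add_zero] at h
    exact h
  -- main equation
  have hmain : A + B * (R⁻¹ * Q₁ᵀ * (X * T * Xᵀ - A)) = X * T * Xᵀ := by
    have hb : B * (R⁻¹ * Q₁ᵀ * (X * T * Xᵀ - A)) = X * T * Xᵀ - A := by
      rw [← Matrix.mul_assoc B (R⁻¹ * Q₁ᵀ), ← Matrix.mul_assoc B R⁻¹ Q₁ᵀ, hBR]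
      exact hQ1
    rw [hb, add_sub_cancel]
  refine ⟨hmain, ?_⟩
  rw [hmain]
  -- similar matrices have equal charpoly
  set P : Matrix (Fin n) (Fin n) (Polynomial ℝ) → Matrix (Fin n) (Fin n) (Polynomial ℝ) := id
  have hPP : ((Polynomial.C : ℝ →+* Polynomial ℝ).mapMatrix X) *
      ((Polynomial.C : ℝ →+* Polynomial ℝ).mapMatrix Xᵀ) = 1 := by
    rw [← _root_.map_mul, hX', _root_.map_one]
  have hmapmul : ((Polynomial.C : ℝ →+* Polynomial ℝ).mapMatrix (X * T * Xᵀ)) =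
      ((Polynomial.C : ℝ →+* Polynomial ℝ).mapMatrix X) *
      ((Polynomial.C : ℝ →+* Polynomial ℝ).mapMatrix T) *
      ((Polynomial.C : ℝ →+* Polynomial ℝ).mapMatrix Xᵀ) := by
    rw [_root_.map_mul, _root_.map_mul]
  have hscalar : (Matrix.scalar (Fin n) (Polynomial.X : Polynomial ℝ)) =
      (Polynomial.X : Polynomial ℝ) • (1 : Matrix (Fin n) (Fin n) (Polynomial ℝ)) := by
    rw [Matrix.smul_one_eq_diagonal]; rfl
  have hP : (X * T * Xᵀ).charmatrix =
      ((Polynomial.C : ℝ →+* Polynomial ℝ).mapMatrix X) * T.charmatrix *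
      ((Polynomial.C : ℝ →+* Polynomial ℝ).mapMatrix Xᵀ) := by
    unfold Matrix.charmatrix
    rw [Matrix.mul_sub, Matrix.sub_mul, hmapmul, hscalar, Matrix.mul_smul, Matrix.mul_one,
      Matrix.smul_mul, hPP]
  unfold Matrix.charpoly
  rw [hP, Matrix.det_mul, Matrix.det_mul]
  have hdet : (((Polynomial.C : ℝ →+* Polynomial ℝ).mapMatrix X)).det *
      (((Polynomial.C : ℝ →+* Polynomial ℝ).mapMatrix Xᵀ)).det = 1 := by
    rw [← Matrix.det_mul, hPP, Matrix.det_one]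
  calc (((Polynomial.C : ℝ →+* Polynomial ℝ).mapMatrix X)).det * T.charmatrix.det *
      (((Polynomial.C : ℝ →+* Polynomial ℝ).mapMatrix Xᵀ)).det
      = ((((Polynomial.C : ℝ →+* Polynomial ℝ).mapMatrix X)).det *
        (((Polynomial.C : ℝ →+* Polynomial ℝ).mapMatrix Xᵀ)).det) * T.charmatrix.det := by ring
    _ = T.charmatrix.det := by rw [hdet, one_mul]
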